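/- Let J(u) = -log ∫_Ω e^{-u} dV on ℰ₁(Ω). For u ∈ ℰ₁ and v ∈ ℰ₀ ∩ C, lim_{t→0⁺} (J(u+tv) - J(u))/t = ∫_Ω v e^{-u} dV / ∫_Ω e^{-u} dV, and liminf_{t→0⁻} (J(P(u+tv)) - J(u))/t ≥ ∫_Ω v e^{-u} dV / ∫_Ω e^{-u} dV. -/

import Mathlib

open MeasureTheory Filter Topology Set ENNReal

noncomputable section

/-- `ℂⁿ`. -/
abbrev Cn (n : ℕ) := Fin n → ℂ

/-- Real-valued plurisubharmonic function on `Ω`: upper semicontinuous on `Ω` and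
satisfying the sub-mean-value inequality on circles inside complex lines contained in `Ω`. -/
def IsPSHOn {n : ℕ} (Ω : Set (Cn n)) (u : Cn n → ℝ) : Prop :=
  UpperSemicontinuousOn u Ω ∧
  ∀ a ∈ Ω, ∀ b : Cn n, ∀ r : ℝ, 0 < r →
    (∀ t : ℂ, ‖t‖ ≤ r → a + t • b ∈ Ω) →
    u a ≤ (1 / (2 * Real.pi)) *
      ∫ θ in (0:ℝ)..(2 * Real.pi), u (a + ((r : ℂ) * Complex.exp (θ * Complex.I)) • b)

/-- `Ω` is a bounded hyperconvex domain: open, bounded, nonempty, and carrying a negative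
continuous plurisubharmonic exhaustion function. -/
def IsHyperconvex {n : ℕ} (Ω : Set (Cn n)) : Prop :=
  IsOpen Ω ∧ Bornology.IsBounded Ω ∧ Ω.Nonempty ∧
  ∃ ρ : Cn n → ℝ, ContinuousOn ρ Ω ∧ IsPSHOn Ω ρ ∧ (∀ x ∈ Ω, ρ x < 0) ∧
    ∀ c : ℝ, c < 0 → closure {x ∈ Ω | ρ x < c} ⊆ Ω

/-- Abstract data for the complex Monge–Ampère operator `(dd^c ·)^n`
(normalized by `dd^c = (i/π) ∂ ∂-bar`), assigning to a (plurisubharmonic) function its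
Monge–Ampère measure, together with the mixed operator `dd^c u₁ ∧ ⋯ ∧ dd^c u_n`. -/
structure MongeAmpere (n : ℕ) where
  /-- `(dd^c u)^n` -/
  MA : (Cn n → ℝ) → Measure (Cn n)
  /-- `dd^c u₁ ∧ ⋯ ∧ dd^c u_n` -/
  MAmix : (Fin n → (Cn n → ℝ)) → Measure (Cn n)
  mix_diag : ∀ u, MAmix (fun _ => u) = MA u

/-- The Cegrell class `ℰ₀(Ω)`: bounded plurisubharmonic functions with boundary limit `0`
at every boundary point and finite total Monge–Ampère mass. -/
def E0 {n : ℕ} (D : MongeAmpere n) (Ω : Set (Cn n)) : Set (Cn n → ℝ) :=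
  {φ | IsPSHOn Ω φ ∧ BddBelow (φ '' Ω) ∧ (∀ x ∈ Ω, φ x ≤ 0) ∧
    (∀ ξ ∈ frontier Ω, Tendsto φ (nhdsWithin ξ Ω) (nhds 0)) ∧
    D.MA φ Ω < ⊤}

/-- `v j` decreases pointwise on `Ω` to `u`. -/
def DecrLimitOn {n : ℕ} (Ω : Set (Cn n)) (u : Cn n → ℝ) (v : ℕ → Cn n → ℝ) : Prop :=
  (∀ x ∈ Ω, ∀ j k : ℕ, j ≤ k → v k x ≤ v j x) ∧
  ∀ x ∈ Ω, Tendsto (fun j => v j x) atTop (nhds (u x))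

/-- The Cegrell class `ℰ_p(Ω)`: decreasing limits of `ℰ₀` functions with uniformly
bounded `p`-energies. -/
def Ep {n : ℕ} (D : MongeAmpere n) (Ω : Set (Cn n)) (p : ℝ) : Set (Cn n → ℝ) :=
  {u | ∃ v : ℕ → Cn n → ℝ, (∀ j, v j ∈ E0 D Ω) ∧ DecrLimitOn Ω u v ∧
    ∃ M : ℝ, ∀ j, ∫ x in Ω, (-(v j x)) ^ p ∂(D.MA (v j)) ≤ M}

/-- The finite-energy class `ℰ₁(Ω)`. -/
def E1 {n : ℕ} (D : MongeAmpere n) (Ω : Set (Cn n)) : Set (Cn n → ℝ) := Ep D Ω 1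

/-- The Cegrell class `ℱ(Ω)`: decreasing limits of `ℰ₀` functions with uniformly bounded
total Monge–Ampère masses. -/
def Fclass {n : ℕ} (D : MongeAmpere n) (Ω : Set (Cn n)) : Set (Cn n → ℝ) :=
  {u | ∃ v : ℕ → Cn n → ℝ, (∀ j, v j ∈ E0 D Ω) ∧ DecrLimitOn Ω u v ∧
    ∃ M : ℝ≥0∞, M < ⊤ ∧ ∀ j, D.MA (v j) Ω ≤ M}

/-- The Cegrell class `ℱ₁(Ω)`: decreasing limits of `ℰ₀` functions `u_j` with
`sup_j ∫ ((-u_j)+1) (dd^c u_j)^n < ∞`. -/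
def F1class {n : ℕ} (D : MongeAmpere n) (Ω : Set (Cn n)) : Set (Cn n → ℝ) :=
  {u | ∃ v : ℕ → Cn n → ℝ, (∀ j, v j ∈ E0 D Ω) ∧ DecrLimitOn Ω u v ∧
    ∃ M : ℝ, ∀ j, ∫ x in Ω, (-(v j x) + 1) ∂(D.MA (v j)) ≤ M}

/-- The pluricomplex energy `e(u) = ∫_Ω (-u)(dd^c u)^n`. -/
def energy {n : ℕ} (D : MongeAmpere n) (Ω : Set (Cn n)) (u : Cn n → ℝ) : ℝ :=
  ∫ x in Ω, (-(u x)) ∂(D.MA u)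
/-- The plurisubharmonic envelope `P(f) = sup {w ∈ ℰ₁ : w ≤ f on Ω}` (pointwise sup). -/
def Penv {n : ℕ} (D : MongeAmpere n) (Ω : Set (Cn n)) (f : Cn n → ℝ) : Cn n → ℝ :=
  fun x => sSup ((fun w => w x) '' {w | w ∈ E1 D Ω ∧ ∀ y ∈ Ω, w y ≤ f y})

section Auxiliary

lemma e1_nonpos {n : ℕ} {D : MongeAmpere n} {Ω : Set (Cn n)} {u : Cn n → ℝ}
    (hu : u ∈ E1 D Ω) : ∀ x ∈ Ω, u x ≤ 0 := by
  obtain ⟨w, hw0, ⟨hdec, hlim⟩, -⟩ := hu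
  intro x hx
  have h1 : u x ≤ w 0 x :=
    le_of_tendsto (hlim x hx) (Filter.Eventually.of_forall fun j => hdec x hx 0 j (Nat.zero_le j))
  exact h1.trans ((hw0 0).2.2.1 x hx)

lemma e1_aemeasurable {n : ℕ} {D : MongeAmpere n} {Ω : Set (Cn n)} (hΩo : IsOpen Ω)
    {u : Cn n → ℝ} (hu : u ∈ E1 D Ω) : AEMeasurable u (volume.restrict Ω) := by
  classical
  obtain ⟨w, hw0, ⟨hdec, hlim⟩, -⟩ := hu
  have hopen : ∀ (j : ℕ) (c : ℝ), IsOpen {x | x ∈ Ω ∧ w j x < c} := by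
    intro j c
    rw [isOpen_iff_mem_nhds]
    rintro x ⟨hxΩ, hxc⟩
    have h1 := (hw0 j).1.1 x hxΩ c hxc
    rw [nhdsWithin_eq_nhds.2 (hΩo.mem_nhds hxΩ)] at h1
    filter_upwards [h1, hΩo.mem_nhds hxΩ] with y hy1 hy2
    exact ⟨hy2, hy1⟩
  set g : ℕ → Cn n → ℝ := fun j x => if x ∈ Ω then w j x else 0 with hgdef
  have hgm : ∀ j, Measurable (g j) := by
    intro j
    apply measurable_of_Iio
    intro c
    have hset : g j ⁻¹' Set.Iio c = {x | x ∈ Ω ∧ w j x < c} ∪ ({x | (0:ℝ) < c} ∩ Ωᶜ) := by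
      ext x
      by_cases hx : x ∈ Ω <;> simp [hgdef, hx]
    rw [hset]
    refine ((hopen j c).measurableSet).union ?_
    by_cases hc : (0:ℝ) < c
    · have : ({x : Cn n | (0:ℝ) < c} ∩ Ωᶜ) = Ωᶜ := by
        ext x; simp [hc]
      rw [this]; exact hΩo.measurableSet.compl
    · have : ({x : Cn n | (0:ℝ) < c} ∩ Ωᶜ) = (∅ : Set (Cn n)) := by
        ext x; simp [hc]
      rw [this]; exact MeasurableSet.empty
  set u' : Cn n → ℝ := fun x => if x ∈ Ω then u x else 0 with hu'def
  have hum : Measurable u' := by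
    apply measurable_of_tendsto_metrizable hgm
    rw [tendsto_pi_nhds]
    intro x
    by_cases hx : x ∈ Ω
    · simpa [hgdef, hu'def, hx] using hlim x hx
    · simpa [hgdef, hu'def, hx] using tendsto_const_nhds
  refine ⟨u', hum, ?_⟩
  filter_upwards [ae_restrict_mem hΩo.measurableSet] with x hx
  simp [hu'def, hx]

lemma aux_liminf {f : ℝ → ℝ} {r : ℝ} (hr : r ≤ 0)
    (h : ({a : ℝ | ∀ᶠ t in 𝓝[<] (0:ℝ), a ≤ f t} : Set ℝ) = ∅ ∨
      (∀ᶠ t in 𝓝[<] (0:ℝ), r ≤ f t)) :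
    r ≤ Filter.liminf f (𝓝[<] (0:ℝ)) := by
  rw [Filter.liminf_eq]
  rcases h with h | h
  · rw [h, Real.sSup_empty]; exact hr
  · by_cases hb : BddAbove {a : ℝ | ∀ᶠ t in 𝓝[<] (0:ℝ), a ≤ f t}
    · exact le_csSup hb h
    · rw [csSup_of_not_bddAbove hb, Real.sSup_empty]; exact hr

end Auxiliary

/-- **Example 5.1.** For `J(u) = -log ∫ e^{-u} dV` on `ℰ₁(Ω)`, `u ∈ ℰ₁`, `v ∈ ℰ₀ ∩ C`:
`lim_{t→0⁺}(J(u+tv)-J(u))/t = ∫ v e^{-u} dV / ∫ e^{-u} dV` and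
`liminf_{t→0⁻}(J(P(u+tv))-J(u))/t ≥ ∫ v e^{-u} dV / ∫ e^{-u} dV`. -/
theorem stmt16 {n : ℕ} (hn : 0 < n) (Ω : Set (Cn n)) (hΩ : IsHyperconvex Ω)
    (D : MongeAmpere n) (J : (Cn n → ℝ) → ℝ)
    (hJ : J = fun u => -Real.log (∫ x in Ω, Real.exp (-(u x))))
    (u : Cn n → ℝ) (hu : u ∈ E1 D Ω)
    (v : Cn n → ℝ) (hv : v ∈ E0 D Ω) (hvc : ContinuousOn v Ω) :
    Tendsto (fun t => (J (fun x => u x + t * v x) - J u) / t) (nhdsWithin 0 (Set.Ioi 0))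
      (nhds ((∫ x in Ω, v x * Real.exp (-(u x))) / ∫ x in Ω, Real.exp (-(u x)))) ∧
    (∫ x in Ω, v x * Real.exp (-(u x))) / (∫ x in Ω, Real.exp (-(u x))) ≤
      liminf (fun t => (J (Penv D Ω (fun x => u x + t * v x)) - J u) / t)
        (nhdsWithin 0 (Set.Iio 0)) := by
  obtain ⟨hΩo, hΩb, hΩne, -⟩ := hΩ
  have hΩm : MeasurableSet Ω := hΩo.measurableSet
  have hu0 : ∀ x ∈ Ω, u x ≤ 0 := e1_nonpos hu
  have humeas : AEMeasurable u (volume.restrict Ω) := e1_aemeasurable hΩo hu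
  have hvle : ∀ x ∈ Ω, v x ≤ 0 := hv.2.2.1
  obtain ⟨m, hm⟩ := hv.2.1
  set M : ℝ := max (-m) 1 with hMdef
  have hM1 : (1:ℝ) ≤ M := le_max_right _ _
  have hM0 : (0:ℝ) ≤ M := by linarith
  have hvM : ∀ x ∈ Ω, -M ≤ v x ∧ v x ≤ 0 := by
    intro x hx
    refine ⟨?_, hvle x hx⟩
    have h1 : m ≤ v x := hm (Set.mem_image_of_mem v hx)
    have h2 : -m ≤ M := le_max_left _ _
    linarith
  have hvmeas : AEMeasurable v (volume.restrict Ω) := hvc.aemeasurable hΩm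
  simp only [hJ]
  obtain ⟨N, hN⟩ : ∃ y : ℝ, y = ∫ x in Ω, v x * Real.exp (-(u x)) := ⟨_, rfl⟩
  obtain ⟨g0, hg0⟩ : ∃ y : ℝ, y = ∫ x in Ω, Real.exp (-(u x)) := ⟨_, rfl⟩
  rw [← hN, ← hg0]
  -- ratio is nonpositive
  have hNle : N ≤ 0 := by
    rw [hN]
    apply integral_nonpos_of_ae
    filter_upwards [ae_restrict_mem hΩm] with x hx
    have h1 := hvle x hx
    have h2 := (Real.exp_pos (-(u x))).le
    simpa using mul_nonpos_iff.2 (Or.inr ⟨h1, h2⟩)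
  have hg0nn : 0 ≤ g0 := by
    rw [hg0]; exact integral_nonneg fun x => (Real.exp_pos _).le
  have hratio : N / g0 ≤ 0 := div_nonpos_iff.2 (Or.inr ⟨hNle, hg0nn⟩)
  -- the envelope is squeezed between u and u + t v for t < 0
  have hPenv : ∀ t : ℝ, t < 0 → ∀ x ∈ Ω,
      u x ≤ Penv D Ω (fun y => u y + t * v y) x ∧
        Penv D Ω (fun y => u y + t * v y) x ≤ u x + t * v x := by
    intro t ht x hx
    have hmemset : u ∈ {w | w ∈ E1 D Ω ∧ ∀ y ∈ Ω, w y ≤ u y + t * v y} := by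
      refine ⟨hu, fun y hy => ?_⟩
      nlinarith [(hvM y hy).2]
    have hub : (u x + t * v x) ∈
        upperBounds ((fun w => w x) ''
          {w | w ∈ E1 D Ω ∧ ∀ y ∈ Ω, w y ≤ u y + t * v y}) := by
      rintro b ⟨w, hw, rfl⟩
      exact hw.2 x hx
    constructor
    · exact le_csSup ⟨_, hub⟩ (Set.mem_image_of_mem _ hmemset)
    · exact csSup_le ⟨u x, Set.mem_image_of_mem _ hmemset⟩ fun b hb => hub hb
  by_cases hint : Integrable (fun x => Real.exp (-(u x))) (volume.restrict Ω)
  case neg =>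
    -- degenerate case: `e^{-u}` is not integrable, everything is `0`.
    have hg0z : g0 = 0 := by rw [hg0]; exact integral_undef hint
    have hJu0 : -Real.log g0 = 0 := by rw [hg0z, Real.log_zero, neg_zero]
    constructor
    · have hr0 : N / g0 = 0 := by rw [hg0z]; simp
      rw [hr0]
      have hev : ∀ᶠ t in 𝓝[>] (0:ℝ),
          (-Real.log (∫ x in Ω, Real.exp (-(u x + t * v x))) - -Real.log g0) / t = 0 := by
        filter_upwards [self_mem_nhdsWithin] with t (ht : t ∈ Set.Ioi 0)
        have hnot : ¬ Integrable (fun x => Real.exp (-(u x + t * v x))) (volume.restrict Ω) := by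
          intro hcon
          apply hint
          have hm2 : AEMeasurable (fun x => Real.exp (-(u x))) (volume.restrict Ω) :=
            (Real.measurable_exp.comp_aemeasurable humeas.neg)
          apply Integrable.mono' hcon hm2.aestronglyMeasurable
          filter_upwards [ae_restrict_mem hΩm] with x hx
          rw [Real.norm_eq_abs, abs_of_pos (Real.exp_pos _)]
          apply Real.exp_le_exp.2
          nlinarith [(hvM x hx).2, Set.mem_Ioi.1 ht]
        rw [integral_undef hnot, Real.log_zero, neg_zero, hJu0]
        simp
      exact Tendsto.congr' (hev.mono fun t ht => ht.symm) tendsto_const_nhds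
    · apply aux_liminf hratio
      right
      filter_upwards [self_mem_nhdsWithin] with t (ht : t ∈ Set.Iio 0)
      have ht0 : t < 0 := ht
      have hnot : ¬ Integrable
          (fun x => Real.exp (-(Penv D Ω (fun x => u x + t * v x) x))) (volume.restrict Ω) := by
        intro hcon
        apply hint
        have hm2 : AEStronglyMeasurable (fun x => Real.exp (t * M) * Real.exp (-(u x)))
            (volume.restrict Ω) :=
          ((Real.measurable_exp.comp_aemeasurable humeas.neg).const_mul _).aestronglyMeasurable
        have hmin : Integrable (fun x => Real.exp (t * M) * Real.exp (-(u x)))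
            (volume.restrict Ω) := by
          apply Integrable.mono' hcon hm2
          filter_upwards [ae_restrict_mem hΩm] with x hx
          rw [Real.norm_eq_abs, abs_mul, abs_of_pos (Real.exp_pos _),
            abs_of_pos (Real.exp_pos _), ← Real.exp_add]
          apply Real.exp_le_exp.2
          have hP := (hPenv t ht0 x hx).2
          nlinarith [(hvM x hx).1]
        have hfin := hmin.const_mul (Real.exp (-(t * M)))
        have heq : (fun x => Real.exp (-(t * M)) * (Real.exp (t * M) * Real.exp (-(u x))))
            = fun x => Real.exp (-(u x)) := by
          funext x; rw [← mul_assoc, ← Real.exp_add]; norm_num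
        rwa [heq] at hfin
      rw [integral_undef hnot, Real.log_zero, neg_zero, hJu0, hg0z]
      simp
  case pos =>
    -- main case: `e^{-u}` is integrable.
    have hg0pos : 0 < g0 := by
      have hvol : 0 < volume Ω := hΩo.measure_pos volume hΩne
      have hvolt : volume Ω < ⊤ := hΩb.measure_lt_top
      have hone : IntegrableOn (fun _ : Cn n => (1:ℝ)) Ω volume :=
        integrableOn_const hvolt.ne
      have h1 : ∫ x in Ω, (1:ℝ) ≤ g0 := by
        rw [hg0]
        apply integral_mono_ae hone hint
        filter_upwards [ae_restrict_mem hΩm] with x hx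
        rw [← Real.exp_zero]
        exact Real.exp_le_exp.2 (by linarith [hu0 x hx])
      have h2 : ∫ x in Ω, (1:ℝ) = (volume Ω).toReal := by simp; rfl
      rw [h2] at h1
      exact lt_of_lt_of_le (ENNReal.toReal_pos hvol.ne' hvolt.ne) h1
    have hmeasF : ∀ t : ℝ, AEStronglyMeasurable (fun x => Real.exp (-(u x + t * v x)))
        (volume.restrict Ω) := fun t =>
      (Real.measurable_exp.comp_aemeasurable
        ((humeas.add (hvmeas.const_mul t)).neg)).aestronglyMeasurable
    have hintb : ∀ t : ℝ, |t| ≤ 1 →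
        Integrable (fun x => Real.exp (-(u x + t * v x))) (volume.restrict Ω) := by
      intro t ht
      apply Integrable.mono' (hint.const_mul (Real.exp M)) (hmeasF t)
      filter_upwards [ae_restrict_mem hΩm] with x hx
      rw [Real.norm_eq_abs, abs_of_pos (Real.exp_pos _), ← Real.exp_add]
      apply Real.exp_le_exp.2
      obtain ⟨hv1, hv2⟩ := hvM x hx
      obtain ⟨ht1, ht2⟩ := abs_le.1 ht
      nlinarith [mul_nonneg (by linarith : (0:ℝ) ≤ 1 - t) (by linarith : (0:ℝ) ≤ -v x)]
    have hsmv : AEStronglyMeasurable (fun x => v x * Real.exp (-(u x))) (volume.restrict Ω) :=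
      (hvmeas.mul (Real.measurable_exp.comp_aemeasurable humeas.neg)).aestronglyMeasurable
    have hintv : Integrable (fun x => v x * Real.exp (-(u x))) (volume.restrict Ω) := by
      apply Integrable.mono' (hint.const_mul M) hsmv
      filter_upwards [ae_restrict_mem hΩm] with x hx
      rw [Real.norm_eq_abs, abs_mul, abs_of_pos (Real.exp_pos _)]
      apply mul_le_mul_of_nonneg_right _ (Real.exp_pos _).le
      obtain ⟨hv1, hv2⟩ := hvM x hx
      rw [abs_le]; constructor <;> linarith
    have h00 : (∫ x in Ω, Real.exp (-(u x + 0 * v x))) = g0 := by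
      rw [hg0]; norm_num
    have hder : HasDerivAt (fun t => ∫ x in Ω, Real.exp (-(u x + t * v x))) (-N) 0 := by
      have hmain := hasDerivAt_integral_of_dominated_loc_of_deriv_le
        (μ := volume.restrict Ω)
        (F := fun t x => Real.exp (-(u x + t * v x)))
        (F' := fun t x => -v x * Real.exp (-(u x + t * v x)))
        (bound := fun x => M * Real.exp M * Real.exp (-(u x)))
        (x₀ := (0:ℝ)) (s := Metric.ball (0:ℝ) 1) (Metric.ball_mem_nhds _ one_pos)
        (Filter.Eventually.of_forall fun t => hmeasF t)
        (by simpa using hintb 0 (by norm_num))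
        (((hvmeas.neg).mul (hmeasF 0).aemeasurable).aestronglyMeasurable)
        ?_ (hint.const_mul (M * Real.exp M)) ?_
      · have heq : (∫ x in Ω, -v x * Real.exp (-(u x + 0 * v x))) = -N := by
          rw [hN]
          rw [← integral_neg]
          congr 1
          funext x
          norm_num
        rw [heq] at hmain
        exact hmain.2
      · -- bound on the derivative
        filter_upwards [ae_restrict_mem hΩm] with x hx t htb
        have htb' : |t| < 1 := by simpa [Real.dist_eq] using Metric.mem_ball.1 htb
        obtain ⟨hv1, hv2⟩ := hvM x hx
        obtain ⟨ht1, ht2⟩ := abs_le.1 htb'.le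
        rw [norm_mul, norm_neg, Real.norm_eq_abs, Real.norm_eq_abs,
          abs_of_pos (Real.exp_pos _)]
        have h1 : |v x| ≤ M := by rw [abs_le]; constructor <;> linarith
        have h2 : Real.exp (-(u x + t * v x)) ≤ Real.exp M * Real.exp (-(u x)) := by
          rw [← Real.exp_add]
          apply Real.exp_le_exp.2
          nlinarith [mul_nonneg (by linarith : (0:ℝ) ≤ 1 - t) (by linarith : (0:ℝ) ≤ -v x)]
        calc |v x| * Real.exp (-(u x + t * v x))
            ≤ M * (Real.exp M * Real.exp (-(u x))) :=
              mul_le_mul h1 h2 (Real.exp_pos _).le hM0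
          _ = M * Real.exp M * Real.exp (-(u x)) := by ring
      · -- differentiability in t
        filter_upwards [] with x t _
        have hinner : HasDerivAt (fun s : ℝ => -(u x + s * v x)) (-v x) t := by
          exact ((hasDerivAt_mul_const (v x)).const_add (u x)).neg
        have := hinner.exp
        exact this.congr_deriv (by ring)
    have hlog : HasDerivAt
        (fun t => -Real.log (∫ x in Ω, Real.exp (-(u x + t * v x)))) (N / g0) 0 := by
      have hne : (∫ x in Ω, Real.exp (-(u x + 0 * v x))) ≠ 0 := by
        rw [h00]; exact hg0pos.ne'
      have h1 := (hder.log hne).neg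
      have h2 : N / g0 = -(-N / ∫ x in Ω, Real.exp (-(u x + 0 * v x))) := by rw [h00]; ring
      rw [h2]; exact h1
    constructor
    · -- Part 1: the one-sided limit
      have hsl := hasDerivAt_iff_tendsto_slope.1 hlog
      have h2 := hsl.mono_left
        (nhdsWithin_mono (0:ℝ) fun x (hx : x ∈ Set.Ioi 0) => ne_of_gt hx)
      refine Tendsto.congr' ?_ h2
      filter_upwards [self_mem_nhdsWithin] with t (ht : t ∈ Set.Ioi 0)
      rw [slope_def_field, sub_zero, h00]
    · -- Part 2: the liminf bound
      have hkey : ∀ t : ℝ, t ∈ Set.Ioo (-1:ℝ) 0 →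
          Integrable (fun x => Real.exp (-(Penv D Ω (fun x => u x + t * v x) x)))
            (volume.restrict Ω) →
          N / g0 ≤ (-Real.log (∫ x in Ω,
            Real.exp (-(Penv D Ω (fun x => u x + t * v x) x))) - -Real.log g0) / t := by
        intro t htI hPint
        obtain ⟨ht1, ht0⟩ := htI
        have habs : |t| ≤ 1 := by rw [abs_le]; constructor <;> linarith
        have hPl := fun x hx => (hPenv t ht0 x hx).1
        have hPu := fun x hx => (hPenv t ht0 x hx).2
        obtain ⟨c, hc⟩ : ∃ c : ℝ, c = -(t * (N / g0)) := ⟨_, rfl⟩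
        have hJen : Real.exp c * g0 ≤ ∫ x in Ω, Real.exp (-(u x + t * v x)) := by
          have hle : ∀ x ∈ Ω, Real.exp c *
              ((1 - c) * Real.exp (-(u x)) + (-t) * (v x * Real.exp (-(u x)))) ≤
                Real.exp (-(u x + t * v x)) := by
            intro x hx
            have hC := Real.exp_pos c
            have hE := Real.exp_pos (-(u x))
            have h1 : (-(t * v x) - c) + 1 ≤ Real.exp (-(t * v x) - c) :=
              Real.add_one_le_exp _
            have h4 : Real.exp c * ((-(t * v x) - c) + 1) ≤ Real.exp (-(t * v x)) := by
              calc Real.exp c * ((-(t * v x) - c) + 1)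
                  ≤ Real.exp c * Real.exp (-(t * v x) - c) :=
                    mul_le_mul_of_nonneg_left h1 hC.le
                _ = Real.exp (-(t * v x)) := by rw [← Real.exp_add]; ring_nf
            have h5 := mul_le_mul_of_nonneg_left h4 hE.le
            have h3 : Real.exp (-(u x + t * v x)) =
                Real.exp (-(u x)) * Real.exp (-(t * v x)) := by
              rw [← Real.exp_add]; ring_nf
            rw [h3]
            calc Real.exp c * ((1 - c) * Real.exp (-(u x)) + (-t) * (v x * Real.exp (-(u x))))
                = Real.exp (-(u x)) * (Real.exp c * ((-(t * v x) - c) + 1)) := by ring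
              _ ≤ Real.exp (-(u x)) * Real.exp (-(t * v x)) := h5
          have hintL : Integrable (fun x => Real.exp c *
              ((1 - c) * Real.exp (-(u x)) + (-t) * (v x * Real.exp (-(u x)))))
              (volume.restrict Ω) :=
            ((hint.const_mul (1 - c)).add (hintv.const_mul (-t))).const_mul (Real.exp c)
          have hmono := integral_mono_ae hintL (hintb t habs) (by
            filter_upwards [ae_restrict_mem hΩm] with x hx
            exact hle x hx)
          have hcalc : (∫ x in Ω, Real.exp c *
              ((1 - c) * Real.exp (-(u x)) + (-t) * (v x * Real.exp (-(u x))))) =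
              Real.exp c * ((1 - c) * g0 + (-t) * N) := by
            rw [integral_const_mul,
              integral_add (hint.const_mul (1 - c)) (hintv.const_mul (-t)),
              integral_const_mul, integral_const_mul, ← hg0, ← hN]
          have hfin : (1 - c) * g0 + (-t) * N = g0 := by
            rw [hc]
            field_simp
            ring
          rw [hcalc, hfin] at hmono
          exact hmono
        have hI2 : (∫ x in Ω, Real.exp (-(u x + t * v x))) ≤
            ∫ x in Ω, Real.exp (-(Penv D Ω (fun x => u x + t * v x) x)) := by
          apply integral_mono_ae (hintb t habs) hPint
          filter_upwards [ae_restrict_mem hΩm] with x hx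
          exact Real.exp_le_exp.2 (by linarith [hPu x hx])
        have hI1 : (∫ x in Ω, Real.exp (-(Penv D Ω (fun x => u x + t * v x) x))) ≤ g0 := by
          rw [hg0]
          apply integral_mono_ae hPint hint
          filter_upwards [ae_restrict_mem hΩm] with x hx
          exact Real.exp_le_exp.2 (by linarith [hPl x hx])
        have hIpos : 0 < ∫ x in Ω, Real.exp (-(Penv D Ω (fun x => u x + t * v x) x)) :=
          lt_of_lt_of_le (mul_pos (Real.exp_pos c) hg0pos) (le_trans hJen hI2)
        have hup : -Real.log (∫ x in Ω,
            Real.exp (-(Penv D Ω (fun x => u x + t * v x) x))) - -Real.log g0 ≤ -c := by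
          have hlog1 := Real.log_le_log (mul_pos (Real.exp_pos c) hg0pos) (le_trans hJen hI2)
          rw [Real.log_mul (Real.exp_ne_zero _) hg0pos.ne', Real.log_exp] at hlog1
          linarith
        have hlo : 0 ≤ -Real.log (∫ x in Ω,
            Real.exp (-(Penv D Ω (fun x => u x + t * v x) x))) - -Real.log g0 := by
          have := Real.log_le_log hIpos hI1
          linarith
        rw [le_div_iff_of_neg ht0]
        have hcc : -c = N / g0 * t := by rw [hc]; ring
        linarith
      have hev : ∀ᶠ t in 𝓝[<] (0:ℝ), t ∈ Set.Ioo (-1:ℝ) 0 := by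
        have h1 : Set.Ioi (-1:ℝ) ∈ 𝓝[<] (0:ℝ) :=
          nhdsWithin_le_nhds (Ioi_mem_nhds (by norm_num))
        filter_upwards [h1, self_mem_nhdsWithin] with t ha (hb : t ∈ Set.Iio 0)
        exact ⟨ha, hb⟩
      apply aux_liminf hratio
      by_cases hJu : 0 ≤ -Real.log g0
      · right
        filter_upwards [hev] with t htI
        by_cases hPint : Integrable
            (fun x => Real.exp (-(Penv D Ω (fun x => u x + t * v x) x))) (volume.restrict Ω)
        · exact hkey t htI hPint
        · rw [integral_undef hPint, Real.log_zero, neg_zero]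
          have h2 : 0 ≤ (0 - -Real.log g0) / t :=
            div_nonneg_iff.2 (Or.inr ⟨by linarith, htI.2.le⟩)
          linarith
      · push_neg at hJu
        by_cases hbad : ∃ᶠ t in 𝓝[<] (0:ℝ), ¬ Integrable
            (fun x => Real.exp (-(Penv D Ω (fun x => u x + t * v x) x))) (volume.restrict Ω)
        · left
          rw [Set.eq_empty_iff_forall_notMem]
          intro a ha
          simp only [Set.mem_setOf_eq] at ha
          obtain ⟨L, hL⟩ : ∃ y : ℝ, y = Real.log g0 := ⟨_, rfl⟩
          have hLpos : 0 < L := by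
            rw [hL]; linarith
          obtain ⟨ε, hε⟩ : ∃ y : ℝ, y = min 1 (L / (|a| + 1)) := ⟨_, rfl⟩
          have hεpos : 0 < ε := by
            rw [hε]; exact lt_min one_pos (div_pos hLpos (by positivity))
          have hsmall : ∀ᶠ t in 𝓝[<] (0:ℝ), -ε < t :=
            (eventually_gt_nhds (by linarith)).filter_mono nhdsWithin_le_nhds
          obtain ⟨t, hbadt, hat, htε, (ht0 : t ∈ Set.Iio 0)⟩ :=
            (hbad.and_eventually (ha.and (hsmall.and self_mem_nhdsWithin))).exists
          rw [integral_undef hbadt, Real.log_zero, neg_zero] at hat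
          -- hat : a ≤ (0 - -Real.log g0) / t
          rw [le_div_iff_of_neg ht0] at hat
          -- hat : 0 - -Real.log g0 ≤ a * t
          have h1 : a * t ≤ |a| * ε := by
            have h2 : a * t ≤ |a * t| := le_abs_self _
            rw [abs_mul] at h2
            have h3 : |t| ≤ ε := by
              rw [abs_of_neg ht0]; linarith
            nlinarith [abs_nonneg a]
          have h3 : |a| * ε < L := by
            have hεle : ε ≤ L / (|a| + 1) := by rw [hε]; exact min_le_right _ _
            have h4 : |a| * ε ≤ |a| * (L / (|a| + 1)) :=
              mul_le_mul_of_nonneg_left hεle (abs_nonneg a)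
            have h5 : |a| * (L / (|a| + 1)) < L := by
              have h6 : (0:ℝ) < |a| + 1 := by positivity
              rw [← mul_div_assoc, div_lt_iff₀ h6]
              nlinarith [abs_nonneg a]
            linarith
          linarith
        · right
          rw [Filter.not_frequently] at hbad
          filter_upwards [hbad, hev] with t hg ht
          exact hkey t ht (not_not.1 hg)
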